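/- If θ is a Pisot number (a real algebraic integer greater than 1 all of whose Galois conjugates other than itself have absolute value less than 1), then the distance from θ^n to the nearest integer tends to 0 as n → ∞. -/

import Mathlib

open IntermediateField Polynomial Filter

/-- A Pisot number: a real algebraic integer `θ > 1` all of whose Galois conjugates
other than `θ` itself have absolute value `< 1`. -/
def IsPisot (θ : ℝ) : Prop :=
  1 < θ ∧ IsIntegral ℤ θ ∧
    ∀ z ∈ ((minpoly ℤ θ).map (algebraMap ℤ ℂ)).roots, z ≠ (θ : ℂ) → ‖z‖ < 1

/-- `round x` is the nearest integer: auxiliary lemma. -/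
lemma abs_sub_round_le_abs_sub_int (x : ℝ) (m : ℤ) : |x - round x| ≤ |x - m| := by
  rcases eq_or_ne m (round x) with rfl | h
  · rfl
  · have h1 : |x - round x| ≤ 1/2 := abs_sub_round x
    have h2 : (1 : ℝ) ≤ |(m : ℝ) - round x| := by
      have h3 : (1:ℤ) ≤ |m - round x| := Int.one_le_abs (sub_ne_zero.2 h)
      have h4 : ((|m - round x| : ℤ) : ℝ) = |(m : ℝ) - round x| := by push_cast; rfl
      rw [← h4]; exact_mod_cast h3
    have h3 : |(m:ℝ) - round x| - |x - round x| ≤ |x - m| := by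
      calc |(m:ℝ) - round x| - |x - round x| ≤ |((m:ℝ) - round x) - (x - round x)| :=
            abs_sub_abs_le_abs_sub _ _
      _ = |x - m| := by rw [← abs_neg]; ring_nf
    linarith

set_option maxHeartbeats 1000000 in
theorem pisot_pow_dist_nearest_int_tendsto_zero (θ : ℝ) (hθ : IsPisot θ) :
    Filter.Tendsto (fun n : ℕ => |θ ^ n - round (θ ^ n)|) Filter.atTop (nhds 0) := by
  classical
  obtain ⟨h1, hint, hconj⟩ := hθ
  have hQ : IsIntegral ℚ θ := hint.tower_top
  set K := ℚ⟮θ⟯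
  set g : K := AdjoinSimple.gen ℚ θ with hg
  haveI : FiniteDimensional ℚ K := adjoin.finiteDimensional hQ
  have hgint : IsIntegral ℤ g := by
    have hmap : algebraMap K ℝ g = θ := AdjoinSimple.algebraMap_gen ℚ θ
    rw [← isIntegral_algebraMap_iff (algebraMap K ℝ).injective, hmap]; exact hint
  -- canonical embedding τ : K →ₐ[ℚ] ℂ
  let τ : K →ₐ[ℚ] ℂ := (Complex.ofRealAm.restrictScalars ℚ).comp (IsScalarTower.toAlgHom ℚ K ℝ)
  have hτg : τ g = (θ : ℂ) := by
    simp [τ, AdjoinSimple.algebraMap_gen ℚ θ]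
    exact AdjoinSimple.algebraMap_gen ℚ θ
  -- for each n, `θ^n` minus an integer equals minus the sum of conjugate powers
  have hmain : ∀ n : ℕ, ∃ m : ℤ,
      ((θ:ℂ) ^ n - (m : ℂ)) = - ∑ σ ∈ (Finset.univ.erase τ), (σ g) ^ n := by
    intro n
    have htr : IsIntegral ℤ (Algebra.trace ℚ K (g ^ n)) := Algebra.isIntegral_trace (hgint.pow n)
    obtain ⟨m, hm⟩ := IsIntegrallyClosed.isIntegral_iff.mp htr
    refine ⟨m, ?_⟩
    have hsum : algebraMap ℚ ℂ (Algebra.trace ℚ K (g ^ n)) = ∑ σ : K →ₐ[ℚ] ℂ, σ (g ^ n) :=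
      trace_eq_sum_embeddings ℂ
    rw [← hm] at hsum
    have heq : ((m : ℚ) : ℂ) = ∑ σ : K →ₐ[ℚ] ℂ, (σ g) ^ n := by
      simpa [map_pow] using hsum
    rw [← Finset.add_sum_erase _ _ (Finset.mem_univ τ), hτg] at heq
    push_cast at heq ⊢
    rw [heq]; ring
  -- each conjugate has norm < 1
  have hlt : ∀ σ : K →ₐ[ℚ] ℂ, σ ≠ τ → ‖σ g‖ < 1 := by
    intro σ hσ
    apply hconj
    · rw [Polynomial.mem_roots']
      refine ⟨Polynomial.map_monic_ne_zero (minpoly.monic hint), ?_⟩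
      have h0 : Polynomial.aeval (σ g) (minpoly ℚ θ) = 0 := by
        rw [← minpoly_gen ℚ θ, Polynomial.aeval_algHom_apply, ← hg]
        exact (congrArg σ (minpoly.aeval ℚ g)).trans (map_zero σ)
      have heq : (minpoly ℤ θ).map (algebraMap ℤ ℂ) = (minpoly ℚ θ).map (algebraMap ℚ ℂ) := by
        rw [minpoly.isIntegrallyClosed_eq_field_fractions' ℚ hint, Polynomial.map_map,
          ← IsScalarTower.algebraMap_eq]
      rw [heq, Polynomial.IsRoot, Polynomial.eval_map, ← Polynomial.aeval_def, h0]
    · intro hgg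
      apply hσ
      refine IntermediateField.algHom_ext_of_eq_adjoin (F := ℚ) (E := ℝ) (K := ℂ)
        (s := {θ}) rfl fun x hx => ?_
      obtain rfl : x = θ := hx
      exact (hgg.trans hτg.symm : σ g = τ g)
  -- the bounding sequence
  set f : ℕ → ℝ := fun n => ∑ σ ∈ Finset.univ.erase τ, ‖σ g‖ ^ n with hf
  have hf0 : Tendsto f atTop (nhds 0) := by
    have ht : Tendsto (fun n => ∑ σ ∈ Finset.univ.erase τ, ‖σ g‖ ^ n) atTop
        (nhds (∑ _σ ∈ Finset.univ.erase τ, (0:ℝ))) := by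
      apply tendsto_finset_sum
      intro σ hσ
      exact tendsto_pow_atTop_nhds_zero_of_lt_one (norm_nonneg _)
        (hlt σ (Finset.ne_of_mem_erase hσ))
    rw [Finset.sum_const_zero] at ht; exact ht
  have hbound : ∀ n, |θ ^ n - round (θ ^ n)| ≤ f n := by
    intro n
    obtain ⟨m, hm⟩ := hmain n
    have hnorm : ‖(θ:ℂ) ^ n - (m:ℂ)‖ ≤ f n := by
      rw [hm, norm_neg]
      refine (norm_sum_le _ _).trans ?_
      exact le_of_eq (Finset.sum_congr rfl fun σ _ => norm_pow _ _)
    have hcast : ((θ ^ n - (m:ℝ) : ℝ) : ℂ) = (θ:ℂ) ^ n - (m:ℂ) := by push_cast; ring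
    have habs : |θ ^ n - (m:ℝ)| = ‖(θ:ℂ) ^ n - (m:ℂ)‖ := by
      rw [← hcast, Complex.norm_real, Real.norm_eq_abs]
    exact (abs_sub_round_le_abs_sub_int (θ ^ n) m).trans (by rw [habs] at *; exact hnorm)
  exact squeeze_zero (fun n => abs_nonneg _) hbound hf0
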